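/- arXiv:1809.02995 — 2 statements merged into one kernel-verified Lean document; each statement's English description precedes it below -/
import Mathlib

section
/- Let S be SDD with positive diagonal, D = diag(S), S̃ = D^{-1/2} S D^{-1/2}, Ã = I - S̃, and B̃ = (Ã + I)/2. Then 2·S̃⁺ = (I - B̃)⁺, and for every b orthogonal to ker(S), S̃⁺ D^{-1/2} b = (1/2) ∑_{t=0}^{∞} B̃^t D^{-1/2} b. -/
open Matrix BigOperators

lemma pinv_unique_aux {n : ℕ} [DecidableEq (Fin n)] (M X Y : Matrix (Fin n) (Fin n) ℝ)
    (hX1 : M * X * M = M) (hX2 : X * M * X = X) (hX3 : (M*X).IsSymm) (hX4 : (X*M).IsSymm)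
    (hY1 : M * Y * M = M) (hY2 : Y * M * Y = Y) (hY3 : (M*Y).IsSymm) (hY4 : (Y*M).IsSymm) :
    X = Y := by
  have hMX : M * X = M * Y := by
    calc M * X = (M * Y * M) * X := by rw [hY1]
    _ = (M*Y) * (M*X) := by noncomm_ring
    _ = (M*Y)ᵀ * (M*X)ᵀ := by rw [hY3.eq, hX3.eq]
    _ = ((M*X)*(M*Y))ᵀ := (Matrix.transpose_mul _ _).symm
    _ = ((M*X*M)*Y)ᵀ := by congr 1; noncomm_ring
    _ = (M*Y)ᵀ := by rw [hX1]
    _ = M*Y := hY3.eq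
  have hXM : X * M = Y * M := by
    calc X * M = X * (M * Y * M) := by rw [hY1]
    _ = (X*M) * (Y*M) := by noncomm_ring
    _ = (X*M)ᵀ * (Y*M)ᵀ := by rw [hX4.eq, hY4.eq]
    _ = ((Y*M)*(X*M))ᵀ := (Matrix.transpose_mul _ _).symm
    _ = (Y*(M*X*M))ᵀ := by congr 1; noncomm_ring
    _ = (Y*M)ᵀ := by rw [hX1]
    _ = Y*M := hY4.eq
  calc X = X * M * X := hX2.symm
  _ = Y * M * X := by rw [hXM]
  _ = Y * (M * X) := by noncomm_ring
  _ = Y * (M * Y) := by rw [hMX]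
  _ = Y * M * Y := by noncomm_ring
  _ = Y := hY2

lemma gersh_aux {n : ℕ} [DecidableEq (Fin n)] (S : Matrix (Fin n) (Fin n) ℝ)
    (hpos : ∀ i, 0 < S i i)
    (hSDD : ∀ i, ∑ j ∈ Finset.univ.erase i, |S i j| ≤ S i i)
    (lam : ℝ) (v : Fin n → ℝ) (hv : v ≠ 0)
    (heig : S.mulVec v = lam • (Matrix.diagonal (fun i => S i i)).mulVec v) :
    |lam - 1| ≤ 1 := by
  have hne : ∃ j, v j ≠ 0 := Function.ne_iff.mp hv
  obtain ⟨j0, hj0⟩ := hne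
  have hnonempty : (Finset.univ : Finset (Fin n)).Nonempty := ⟨j0, Finset.mem_univ _⟩
  obtain ⟨i, -, hi⟩ := Finset.exists_max_image Finset.univ (fun j => |v j|) hnonempty
  have hvi : 0 < |v i| := lt_of_lt_of_le (abs_pos.mpr hj0) (hi j0 (Finset.mem_univ _))
  have hrow : ∑ j, S i j * v j = lam * (S i i * v i) := by
    have := congrFun heig i
    have h2 : ((diagonal (fun i => S i i)).mulVec v) i = S i i * v i := Matrix.mulVec_diagonal _ _ _
    simp only [Matrix.mulVec, dotProduct, Pi.smul_apply, smul_eq_mul] at this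
    simp only [Matrix.mulVec, dotProduct] at h2
    rw [this, h2]
  have hsplit : S i i * v i + ∑ j ∈ Finset.univ.erase i, S i j * v j = ∑ j, S i j * v j :=
    Finset.add_sum_erase _ (fun j => S i j * v j) (Finset.mem_univ i)
  have key : (lam - 1) * (S i i * v i) = ∑ j ∈ Finset.univ.erase i, S i j * v j := by
    rw [sub_mul, one_mul, ← hrow, ← hsplit]; ring
  have hbound : |lam - 1| * (S i i * |v i|) ≤ S i i * |v i| := by
    have h1 : |(lam - 1) * (S i i * v i)| ≤ ∑ j ∈ Finset.univ.erase i, |S i j| * |v j| := by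
      rw [key]
      calc |∑ j ∈ Finset.univ.erase i, S i j * v j| ≤ ∑ j ∈ Finset.univ.erase i, |S i j * v j| :=
        Finset.abs_sum_le_sum_abs _ _
      _ = ∑ j ∈ Finset.univ.erase i, |S i j| * |v j| := by simp [abs_mul]
    have h2 : ∑ j ∈ Finset.univ.erase i, |S i j| * |v j| ≤ ∑ j ∈ Finset.univ.erase i, |S i j| * |v i| := by
      apply Finset.sum_le_sum
      intro j _
      exact mul_le_mul_of_nonneg_left (hi j (Finset.mem_univ _)) (abs_nonneg _)
    have h3 : ∑ j ∈ Finset.univ.erase i, |S i j| * |v i| ≤ S i i * |v i| := by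
      rw [← Finset.sum_mul]
      exact mul_le_mul_of_nonneg_right (hSDD i) (le_of_lt hvi)
    calc |lam - 1| * (S i i * |v i|) = |(lam - 1) * (S i i * v i)| := by
          rw [abs_mul, abs_mul, abs_of_pos (hpos i)]
    _ ≤ S i i * |v i| := le_trans h1 (le_trans h2 h3)
  have hc : 0 < S i i * |v i| := mul_pos (hpos i) hvi
  nlinarith [abs_nonneg (lam - 1)]


/-- for an SDD matrix `S` with positive diagonal, with
`Stil = D^{-1/2} S D^{-1/2}`, `Atil = I - Stil`, `Btil = (Atil + I)/2`,
the Moore–Penrose pseudo-inverses satisfy `2·Stil⁺ = (I - Btil)⁺`, and for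
every `b` orthogonal to `ker S`,
`Stil⁺ D^{-1/2} b = (1/2) ∑_{t=0}^∞ Btil^t D^{-1/2} b`. -/
theorem stmt12 {n : ℕ} [DecidableEq (Fin n)]
    (S : Matrix (Fin n) (Fin n) ℝ) (hsymm : S.IsSymm)
    (hpos : ∀ i, 0 < S i i)
    (hSDD : ∀ i, ∑ j ∈ Finset.univ.erase i, |S i j| ≤ S i i)
    (Dinvhalf Stil Atil Btil : Matrix (Fin n) (Fin n) ℝ)
    (hDinvhalf : Dinvhalf = Matrix.diagonal (fun i => (Real.sqrt (S i i))⁻¹))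
    (hStil : Stil = Dinvhalf * S * Dinvhalf)
    (hAtil : Atil = 1 - Stil)
    (hBtil : Btil = (1 / 2 : ℝ) • (Atil + 1))
    (Sp Qp : Matrix (Fin n) (Fin n) ℝ)
    -- `Sp` is the Moore–Penrose pseudo-inverse of `Stil`:
    (hS1 : Stil * Sp * Stil = Stil) (hS2 : Sp * Stil * Sp = Sp)
    (hS3 : (Stil * Sp).IsSymm) (hS4 : (Sp * Stil).IsSymm)
    -- `Qp` is the Moore–Penrose pseudo-inverse of `I - Btil`:
    (hQ1 : (1 - Btil) * Qp * (1 - Btil) = 1 - Btil)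
    (hQ2 : Qp * (1 - Btil) * Qp = Qp)
    (hQ3 : ((1 - Btil) * Qp).IsSymm) (hQ4 : (Qp * (1 - Btil)).IsSymm) :
    (2 : ℝ) • Sp = Qp ∧
    (∀ b : Fin n → ℝ, (∀ y : Fin n → ℝ, S.mulVec y = 0 → b ⬝ᵥ y = 0) →
      Sp.mulVec (Dinvhalf.mulVec b) =
        (1 / 2 : ℝ) • ∑' t : ℕ, (Btil ^ t).mulVec (Dinvhalf.mulVec b)) := by
  classical
  have hq : ∀ i, 0 < Real.sqrt (S i i) := fun i => Real.sqrt_pos.2 (hpos i)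
  set Dhalf : Matrix (Fin n) (Fin n) ℝ := Matrix.diagonal (fun i => Real.sqrt (S i i)) with hDhalf
  have hDD1 : Dinvhalf * Dhalf = 1 := by
    rw [hDinvhalf, hDhalf, Matrix.diagonal_mul_diagonal,
      show (fun i => (Real.sqrt (S i i))⁻¹ * Real.sqrt (S i i)) = fun _ => (1:ℝ) from
        funext fun i => inv_mul_cancel₀ (hq i).ne', Matrix.diagonal_one]
  have hDD2 : Dhalf * Dinvhalf = 1 := by
    rw [hDinvhalf, hDhalf, Matrix.diagonal_mul_diagonal,
      show (fun i => Real.sqrt (S i i) * (Real.sqrt (S i i))⁻¹) = fun _ => (1:ℝ) from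
        funext fun i => mul_inv_cancel₀ (hq i).ne', Matrix.diagonal_one]
  have hDh2 : Dhalf * Dhalf = Matrix.diagonal (fun i => S i i) := by
    rw [hDhalf, Matrix.diagonal_mul_diagonal]
    exact congrArg Matrix.diagonal (funext fun i => Real.mul_self_sqrt (hpos i).le)
  have hSB : (1 : Matrix (Fin n) (Fin n) ℝ) - Btil = (1/2 : ℝ) • Stil := by
    rw [hBtil, hAtil]
    module
  -- Part 1
  have e1 : ((1/2:ℝ)•Stil) * ((2:ℝ)•Sp) = Stil * Sp := by
    rw [smul_mul_assoc, mul_smul_comm, smul_smul]; norm_num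
  have e2 : ((2:ℝ)•Sp) * ((1/2:ℝ)•Stil) = Sp * Stil := by
    rw [smul_mul_assoc, mul_smul_comm, smul_smul]; norm_num
  have part1 : (2 : ℝ) • Sp = Qp := by
    apply pinv_unique_aux ((1 : Matrix (Fin n) (Fin n) ℝ) - Btil) ((2:ℝ)•Sp) Qp
    · rw [hSB, e1, mul_smul_comm, hS1]
    · rw [hSB, e2, mul_smul_comm, hS2]
    · rw [hSB, e1]; exact hS3
    · rw [hSB, e2]; exact hS4
    · exact hQ1
    · exact hQ2
    · exact hQ3
    · exact hQ4
  refine ⟨part1, ?_⟩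
  -- symmetry facts
  have hStilsymm : Stil.IsSymm := by
    show Stilᵀ = Stil
    rw [hStil, Matrix.transpose_mul, Matrix.transpose_mul, hDinvhalf,
      Matrix.diagonal_transpose, hsymm.eq, ← mul_assoc]
  have hBsymm : Btil.IsSymm := by
    show Btilᵀ = Btil
    rw [hBtil, hAtil]
    simp [Matrix.transpose_smul, Matrix.transpose_add, Matrix.transpose_sub,
      Matrix.transpose_one, hStilsymm.eq]
  have hB : Btil.IsHermitian := by
    show Btilᴴ = Btil
    rw [show Btilᴴ = Btilᵀ from rfl]
    exact hBsymm.eq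
  have hStil2 : Stil = (2:ℝ) • ((1 : Matrix (Fin n) (Fin n) ℝ) - Btil) := by
    rw [hSB, smul_smul]; norm_num
  -- spectral decomposition
  set U : Matrix (Fin n) (Fin n) ℝ := (hB.eigenvectorUnitary : Matrix (Fin n) (Fin n) ℝ) with hU
  set μ : Fin n → ℝ := hB.eigenvalues with hμ
  have hU1 : star U * U = 1 := by
    have := hB.eigenvectorUnitary.2.1
    exact_mod_cast this
  have hU2 : U * star U = 1 := by
    have := hB.eigenvectorUnitary.2.2
    exact_mod_cast this
  have hspec : Btil = U * Matrix.diagonal μ * star U := by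
    have := hB.spectral_theorem
    rw [Unitary.conjStarAlgAut_apply, RCLike.ofReal_real_eq_id, Function.id_comp] at this
    exact this
  have hBU : Btil * U = U * Matrix.diagonal μ := by
    rw [hspec, mul_assoc (U * Matrix.diagonal μ) (star U) U, hU1, mul_one]
  have hdiag : (2:ℝ) • ((1 : Matrix (Fin n) (Fin n) ℝ) - Matrix.diagonal μ)
      = Matrix.diagonal (fun i => 2*(1-μ i)) := by
    ext i j
    by_cases h : i = j <;> simp [h, Matrix.one_apply, Matrix.diagonal_apply, mul_sub]
  have hSU : Stil * U = U * Matrix.diagonal (fun i => 2*(1-μ i)) := by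
    calc Stil * U = (2:ℝ) • (U * ((1 : Matrix (Fin n) (Fin n) ℝ) - Matrix.diagonal μ)) := by
          rw [hStil2, smul_mul_assoc, Matrix.sub_mul, Matrix.one_mul, hBU, Matrix.mul_sub,
            Matrix.mul_one]
    _ = U * ((2:ℝ) • ((1 : Matrix (Fin n) (Fin n) ℝ) - Matrix.diagonal μ)) := by
          rw [mul_smul_comm]
    _ = U * Matrix.diagonal (fun i => 2*(1-μ i)) := by rw [hdiag]
  have hDS : Dhalf * Stil = S * Dinvhalf := by
    rw [hStil, show Dhalf * (Dinvhalf * S * Dinvhalf) = (Dhalf * Dinvhalf) * (S * Dinvhalf)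
      from by noncomm_ring, hDD2, one_mul]
  -- eigenvector columns
  have hStilcol : ∀ i, Stil *ᵥ (fun j => U j i) = (2*(1-μ i)) • (fun j => U j i) := by
    intro i
    funext j
    have h := congrFun (congrFun hSU j) i
    rw [Matrix.mul_diagonal] at h
    rw [Matrix.mul_apply] at h
    simp only [Matrix.mulVec, dotProduct, Pi.smul_apply, smul_eq_mul]
    rw [h]; ring
  have hcolne : ∀ i, (fun j => U j i) ≠ (0 : Fin n → ℝ) := by
    intro i hcol
    have h1 : ∑ k, U k i * U k i = 1 := by
      have := congrFun (congrFun hU1 i) i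
      simpa [Matrix.mul_apply, Matrix.star_apply, Matrix.one_apply] using this
    rw [Finset.sum_eq_zero (fun k _ => by rw [congrFun hcol k]; simp)] at h1
    exact zero_ne_one h1
  -- eigenvalue bounds
  have hmu : ∀ i, 0 ≤ μ i ∧ μ i ≤ 1 := by
    intro i
    set col : Fin n → ℝ := fun j => U j i with hcol
    set v : Fin n → ℝ := Dinvhalf *ᵥ col with hv
    have hcolv : Dhalf *ᵥ v = col := by
      rw [hv, Matrix.mulVec_mulVec, hDD2, Matrix.one_mulVec]
    have hvne : v ≠ 0 := by
      intro h0
      apply hcolne i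
      rw [← hcol, ← hcolv, h0, Matrix.mulVec_zero]
    have heig : S *ᵥ v = (2*(1-μ i)) • (Matrix.diagonal (fun j => S j j)) *ᵥ v := by
      calc S *ᵥ v = (S * Dinvhalf) *ᵥ col := by rw [hv, Matrix.mulVec_mulVec]
      _ = (Dhalf * Stil) *ᵥ col := by rw [hDS]
      _ = Dhalf *ᵥ (Stil *ᵥ col) := by rw [Matrix.mulVec_mulVec]
      _ = Dhalf *ᵥ ((2*(1-μ i)) • col) := by rw [hStilcol i]
      _ = (2*(1-μ i)) • (Dhalf *ᵥ col) := by rw [Matrix.mulVec_smul]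
      _ = (2*(1-μ i)) • ((Dhalf * Dhalf) *ᵥ v) := by rw [← hcolv, Matrix.mulVec_mulVec]
      _ = (2*(1-μ i)) • (Matrix.diagonal (fun j => S j j)) *ᵥ v := by rw [hDh2]
    have := gersh_aux S hpos hSDD (2*(1-μ i)) v hvne heig
    rw [abs_le] at this
    constructor <;> linarith [this.1, this.2]
  -- part 2
  intro b hb
  set c : Fin n → ℝ := Dinvhalf *ᵥ b with hc
  have hker : ∀ u : Fin n → ℝ, Stil *ᵥ u = 0 → c ⬝ᵥ u = 0 := by
    intro u hu
    have h1 : S *ᵥ (Dinvhalf *ᵥ u) = 0 := by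
      rw [Matrix.mulVec_mulVec, ← hDS, ← Matrix.mulVec_mulVec, hu, Matrix.mulVec_zero]
    have h2 := hb _ h1
    calc c ⬝ᵥ u = b ⬝ᵥ (Dinvhalf *ᵥ u) := by
          simp only [hc, hDinvhalf, dotProduct, Matrix.mulVec_diagonal]
          exact Finset.sum_congr rfl fun i _ => by ring
    _ = 0 := h2
  set w : Fin n → ℝ := star U *ᵥ c with hw
  have hw0 : ∀ i, μ i = 1 → w i = 0 := by
    intro i hi
    have h1 : Stil *ᵥ (fun j => U j i) = 0 := by
      rw [hStilcol i, hi]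
      simp
    have h2 := hker _ h1
    rw [hw]
    simp only [Matrix.mulVec, dotProduct, Matrix.star_apply, star_trivial]
    rw [← h2]
    simp only [dotProduct]
    exact Finset.sum_congr rfl fun k _ => by ring
  set z : Fin n → ℝ := fun i => if μ i = 1 then 0 else (1 - μ i)⁻¹ * w i with hz
  have hzsum : HasSum (fun t => Matrix.diagonal (fun i => μ i ^ t) *ᵥ w) z := by
    rw [Pi.hasSum]
    intro i
    simp only [Matrix.mulVec_diagonal]
    by_cases h : μ i = 1
    · rw [show z i = 0 from by rw [hz]; simp [h]]
      rw [show (fun t : ℕ => μ i ^ t * w i) = fun _ => (0:ℝ) from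
        funext fun t => by rw [hw0 i h]; ring]
      exact hasSum_zero
    · have h0 := (hmu i).1
      have h1 : μ i < 1 := lt_of_le_of_ne (hmu i).2 h
      have hgeo := (hasSum_geometric_of_lt_one h0 h1).mul_right (w i)
      rw [show z i = (1 - μ i)⁻¹ * w i from by rw [hz]; simp [h]]
      exact hgeo
  have hBt : ∀ t : ℕ, Btil ^ t = U * Matrix.diagonal (fun i => μ i ^ t) * star U := by
    intro t
    induction t with
    | zero =>
      simp only [pow_zero]
      rw [Matrix.diagonal_one, mul_one, hU2]
    | succ t ih =>
      rw [pow_succ, ih, hspec]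
      calc U * Matrix.diagonal (fun i => μ i ^ t) * star U * (U * Matrix.diagonal μ * star U)
          = U * (Matrix.diagonal (fun i => μ i ^ t) * (star U * U) * Matrix.diagonal μ) * star U := by
            noncomm_ring
      _ = U * (Matrix.diagonal (fun i => μ i ^ t) * Matrix.diagonal μ) * star U := by
            rw [hU1, mul_one]
      _ = U * Matrix.diagonal (fun i => μ i ^ (t+1)) * star U := by
            rw [Matrix.diagonal_mul_diagonal,
              show (fun i => μ i ^ t * μ i) = fun i => μ i ^ (t+1) from
                funext fun i => (pow_succ _ _).symm]
  have hterm : ∀ t : ℕ, (Btil ^ t) *ᵥ c = U *ᵥ (Matrix.diagonal (fun i => μ i ^ t) *ᵥ w) := by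
    intro t
    rw [hBt t, ← Matrix.mulVec_mulVec, ← Matrix.mulVec_mulVec, ← hw]
  have hsum2 : HasSum (fun t => (Btil ^ t) *ᵥ c) (U *ᵥ z) := by
    have hmap := hzsum.mapL (LinearMap.toContinuousLinearMap (Matrix.mulVecLin U))
    have heq : (fun t => (Btil ^ t) *ᵥ c)
        = fun t => (LinearMap.toContinuousLinearMap (Matrix.mulVecLin U))
            (Matrix.diagonal (fun i => μ i ^ t) *ᵥ w) := by
      funext t
      simp [Matrix.mulVecLin_apply, hterm t]
    rw [heq]
    simpa [Matrix.mulVecLin_apply] using hmap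
  have htsum : ∑' t : ℕ, (Btil ^ t) *ᵥ c = U *ᵥ z := hsum2.tsum_eq
  -- U *ᵥ z = 2 • (Sp *ᵥ c)
  have hdz : Matrix.diagonal (fun i => 2*(1-μ i)) *ᵥ z = (2:ℝ) • w := by
    funext i
    simp only [Matrix.mulVec_diagonal, Pi.smul_apply, smul_eq_mul]
    by_cases h : μ i = 1
    · rw [show z i = 0 from by rw [hz]; simp [h], hw0 i h]
      ring
    · rw [show z i = (1 - μ i)⁻¹ * w i from by rw [hz]; simp [h]]
      have hne : (1:ℝ) - μ i ≠ 0 := sub_ne_zero.2 (Ne.symm h)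
      field_simp
  have hxS : Stil *ᵥ (U *ᵥ z) = (2:ℝ) • c := by
    rw [Matrix.mulVec_mulVec, hSU, ← Matrix.mulVec_mulVec, hdz, Matrix.mulVec_smul, hw,
      Matrix.mulVec_mulVec, hU2, Matrix.one_mulVec]
  set z' : Fin n → ℝ := fun i => if μ i = 1 then 0 else (2*(1-μ i))⁻¹ * z i with hz'
  have hxrange : Stil *ᵥ (U *ᵥ z') = U *ᵥ z := by
    rw [Matrix.mulVec_mulVec, hSU, ← Matrix.mulVec_mulVec]
    have hdz' : Matrix.diagonal (fun i => 2*(1-μ i)) *ᵥ z' = z := by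
      funext i
      simp only [Matrix.mulVec_diagonal]
      by_cases h : μ i = 1
      · rw [show z' i = 0 from by rw [hz']; simp [h], show z i = 0 from by rw [hz]; simp [h]]
        ring
      · rw [show z' i = (2*(1-μ i))⁻¹ * z i from by rw [hz']; simp [h],
          show z i = (1 - μ i)⁻¹ * w i from by rw [hz]; simp [h]]
        have h1 : (1:ℝ) - μ i ≠ 0 := sub_ne_zero.2 (Ne.symm h)
        field_simp
    rw [hdz']
  have hSpS : Sp * Stil * Stil = Stil := by
    calc Sp * Stil * Stil = (Sp*Stil)ᵀ * Stilᵀ := by rw [hS4.eq, hStilsymm.eq]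
    _ = (Stil * (Sp * Stil))ᵀ := (Matrix.transpose_mul _ _).symm
    _ = (Stil * Sp * Stil)ᵀ := by rw [mul_assoc]
    _ = Stilᵀ := by rw [hS1]
    _ = Stil := hStilsymm.eq
  have h1 : (Sp * Stil) *ᵥ (U *ᵥ z) = (2:ℝ) • (Sp *ᵥ c) := by
    rw [← Matrix.mulVec_mulVec, hxS, Matrix.mulVec_smul]
  have h2 : (Sp * Stil) *ᵥ (U *ᵥ z) = U *ᵥ z := by
    conv_lhs => rw [← hxrange]
    rw [Matrix.mulVec_mulVec, hSpS, hxrange]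
  have hfin : U *ᵥ z = (2:ℝ) • (Sp *ᵥ c) := by rw [← h1, h2]
  rw [htsum, hfin, smul_smul]
  norm_num
end

section
/- Let X be a graph on n/2 vertices with Laplacian L_X satisfying xᵀL_X x ≥ c‖x̄‖² for every x (where x̄ is x minus its mean, i.e., X has spectral gap at least c). Let G consist of two disjoint copies X₁, X₂ of X connected by a perfect matching M between n/k chosen vertices of X₁ and the corresponding vertices of X₂. Then the Laplacian L of G satisfies: for every unit vector x orthogonal to the all-ones vector, xᵀLx ≥ Ω(1/k), i.e., the smallest nonzero eigenvalue of L is Ω(1/k). -/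
open Matrix BigOperators

private lemma vecMulVec_quad {n : Type*} [Fintype n] (w v y z : n → ℝ) :
    ((Matrix.vecMulVec w v).mulVec y) ⬝ᵥ z = (v ⬝ᵥ y) * (w ⬝ᵥ z) := by
  simp only [Matrix.vecMulVec, Matrix.mulVec, dotProduct, Matrix.of_apply,
    Finset.sum_mul, Finset.mul_sum]
  exact Finset.sum_congr rfl fun j _ => Finset.sum_congr rfl fun i _ => by ring

private lemma sum_mulVec_dot {n ι : Type*} [Fintype n] (s : Finset ι)
    (M : ι → Matrix n n ℝ) (y z : n → ℝ) :
    ((∑ i ∈ s, M i).mulVec y) ⬝ᵥ z = ∑ i ∈ s, ((M i).mulVec y ⬝ᵥ z) := by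
  classical
  induction s using Finset.induction with
  | empty => simp [Matrix.zero_mulVec]
  | insert _ _ h ih =>
      rw [Finset.sum_insert h, Matrix.add_mulVec, add_dotProduct, ih,
        Finset.sum_insert h]

private lemma final_arith (c : ℝ) (hc : 0 < c) (m k N A B a t T : ℝ)
    (hk : 1 ≤ k) (hN : 1 ≤ N) (hNk : N * k = 2 * m)
    (hA : 0 ≤ A) (hB : 0 ≤ B) (hT : 0 ≤ T)
    (hCS1 : (t + 2*a*N)^2 ≤ N * T)
    (hCS2 : t^2 ≤ N * (2*(A+B)))
    (hnorm : A + B + 2*m*a^2 = 1) :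
    min c 8 / 8 / k ≤ c*(A+B) + T := by
  have hk0 : (0:ℝ) < k := by linarith
  have hN0 : (0:ℝ) < N := by linarith
  have hu : 0 ≤ A + B := by linarith
  by_cases h : 1/(8*k) ≤ A + B
  · have h1 : min c 8 / 8 / k ≤ c / (8*k) := by
      rw [div_div]
      exact div_le_div_of_nonneg_right (by linarith [min_le_left c 8]) (by positivity)
    have h2 : c / (8*k) ≤ c * (A+B) := by
      have h' : 1 ≤ (A+B)*(8*k) := by
        rw [div_le_iff₀ (by positivity)] at h; linarith
      rw [div_le_iff₀ (by positivity)]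
      nlinarith [mul_le_mul_of_nonneg_left h' hc.le]
    linarith
  · push_neg at h
    have hlt : (A+B) * (8*k) < 1 := by
      rw [← lt_div_iff₀ (by positivity)]; exact h
    have key : 2*a^2*N^2*k = 2*(1-(A+B))*N := by
      linear_combination 2*N*hnorm + 2*a^2*N*hNk
    have h1 : 2*a^2*N^2 - 2*N*(A+B) ≤ N*T := by
      nlinarith [sq_nonneg (2*t + 2*a*N)]
    have hq : (3:ℝ)/2 ≤ 2*(1-(A+B)) - 2*(A+B)*k := by
      nlinarith [mul_le_mul_of_nonneg_left hk hu]
    have hF : (2*a^2*N^2 - 2*N*(A+B))*k ≤ N*T*k :=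
      mul_le_mul_of_nonneg_right h1 hk0.le
    have hNTk : N * (3/2) ≤ N * (T*k) := by
      nlinarith [mul_le_mul_of_nonneg_left hq hN0.le, mul_le_mul_of_nonneg_left hlt.le hN0.le,
        mul_nonneg (mul_nonneg hu hk0.le) hN0.le]
    have hTk : (3:ℝ)/2 ≤ T*k := le_of_mul_le_mul_left hNTk hN0
    have hε : min c 8 / 8 ≤ 1 := by linarith [min_le_right c 8]
    have h2 : min c 8 / 8 / k ≤ 1 / k := div_le_div_of_nonneg_right hε hk0.le
    have h3 : 1 / k ≤ T := by rw [div_le_iff₀ hk0]; linarith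
    nlinarith [mul_nonneg hc.le hu]

/-- let `X` be a graph on `m = n/2` vertices whose Laplacian `LX`
has spectral gap at least `c` (i.e. `xᵀ LX x ≥ c‖x̄‖²` where `x̄` is `x` minus
its mean). Form `G` from two disjoint copies of `X` joined by a perfect matching
on a set `C` of `n/k` corresponding vertices. Then there is `ε > 0` (depending
only on `c`) such that for every unit vector `x` orthogonal to the all-ones
vector, `xᵀ L x ≥ ε/k`, i.e. the smallest nonzero eigenvalue of `L` is `Ω(1/k)`. -/
theorem stmt16 (c : ℝ) (hc : 0 < c) :
    ∃ ε : ℝ, 0 < ε ∧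
      ∀ (m k : ℕ), 1 ≤ m → 1 ≤ k →
      ∀ (LX : Matrix (Fin m) (Fin m) ℝ), LX.IsSymm →
        LX.mulVec (fun _ => 1) = 0 →
        (∀ y : Fin m → ℝ,
          c * (∑ i, (y i - (∑ j, y j) / m) ^ 2) ≤ LX.mulVec y ⬝ᵥ y) →
      ∀ (C : Finset (Fin m)), C.card * k = 2 * m →
      ∀ (L : Matrix (Fin m ⊕ Fin m) (Fin m ⊕ Fin m) ℝ),
        L = Matrix.fromBlocks LX 0 0 LX +
          ∑ i ∈ C,
            Matrix.vecMulVec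
              ((Pi.single (Sum.inl i) 1 - Pi.single (Sum.inr i) 1 : (Fin m ⊕ Fin m) → ℝ))
              ((Pi.single (Sum.inl i) 1 - Pi.single (Sum.inr i) 1 : (Fin m ⊕ Fin m) → ℝ)) →
      ∀ x : (Fin m ⊕ Fin m) → ℝ, x ⬝ᵥ x = 1 → x ⬝ᵥ (fun _ => 1) = 0 →
        ε / k ≤ L.mulVec x ⬝ᵥ x := by
  refine ⟨min c 8 / 8, by positivity, ?_⟩
  intro m k hm hk LX _hsym _h1 hexp C hC L hL x hx hone
  subst hL
  set x1 : Fin m → ℝ := x ∘ Sum.inl with hx1def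
  set x2 : Fin m → ℝ := x ∘ Sum.inr with hx2def
  have hm0 : (0:ℝ) < m := by exact_mod_cast hm
  have hmne : (m:ℝ) ≠ 0 := ne_of_gt hm0
  -- decompose the quadratic form
  have hquad : ((Matrix.fromBlocks LX 0 0 LX +
      ∑ i ∈ C, Matrix.vecMulVec
        ((Pi.single (Sum.inl i) 1 - Pi.single (Sum.inr i) 1 : (Fin m ⊕ Fin m) → ℝ))
        ((Pi.single (Sum.inl i) 1 - Pi.single (Sum.inr i) 1 : (Fin m ⊕ Fin m) → ℝ))).mulVec x) ⬝ᵥ x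
      = (LX.mulVec x1 ⬝ᵥ x1) + (LX.mulVec x2 ⬝ᵥ x2)
        + ∑ i ∈ C, (x1 i - x2 i)^2 := by
    rw [Matrix.add_mulVec, add_dotProduct, sum_mulVec_dot]
    congr 1
    · rw [Matrix.fromBlocks_mulVec]
      simp only [Matrix.zero_mulVec, add_zero, zero_add]
      simp [dotProduct, Fintype.sum_sum_type, x1, x2]
    · refine Finset.sum_congr rfl fun i _ => ?_
      rw [vecMulVec_quad, sub_dotProduct, single_dotProduct,
        single_dotProduct]
      simp only [hx1def, hx2def, Function.comp_apply]
      ring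
  -- norm and orthogonality
  have hxx : (∑ i, x1 i ^ 2) + (∑ i, x2 i ^ 2) = 1 := by
    have := hx
    simp only [dotProduct, Fintype.sum_sum_type, ← sq] at this
    exact this
  have hsum0 : (∑ i, x1 i) + (∑ i, x2 i) = 0 := by
    have := hone
    simp only [dotProduct, Fintype.sum_sum_type, mul_one] at this
    exact this
  set a : ℝ := (∑ j, x1 j) / (m:ℝ) with ha
  set A : ℝ := ∑ i, (x1 i - a)^2 with hAdef
  set B : ℝ := ∑ i, (x2 i + a)^2 with hBdef
  have hS : (∑ j, x1 j) = m * a := by rw [ha]; field_simp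
  have hS2 : (∑ j, x2 j) = -(m * a) := by linarith
  -- expander bounds
  have e1 : c * A ≤ LX.mulVec x1 ⬝ᵥ x1 := by
    have := hexp x1
    rw [← ha] at this
    exact this
  have e2 : c * B ≤ LX.mulVec x2 ⬝ᵥ x2 := by
    have := hexp x2
    have heq : (∑ i, (x2 i - (∑ j, x2 j) / (m:ℝ)) ^ 2) = B := by
      rw [hBdef]
      refine Finset.sum_congr rfl fun i _ => ?_
      rw [hS2]
      field_simp
      ring
    rw [heq] at this
    exact this
  -- identities
  clear_value a
  have hA1 : A + m * a^2 = ∑ i, x1 i ^ 2 := by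
    have eA : A = (∑ i, x1 i ^ 2) - 2*a*(∑ j, x1 j) + m * a^2 := by
      rw [hAdef]
      have : ∀ i ∈ Finset.univ, (x1 i - a)^2 = x1 i^2 - 2*a*x1 i + a^2 :=
        fun i _ => by ring
      rw [Finset.sum_congr rfl this, Finset.sum_add_distrib, Finset.sum_sub_distrib,
        ← Finset.mul_sum, Finset.sum_const, Finset.card_univ, Fintype.card_fin,
        nsmul_eq_mul]
    rw [eA]
    linear_combination -2*a*hS
  have hB1 : B + m * a^2 = ∑ i, x2 i ^ 2 := by
    have eB : B = (∑ i, x2 i ^ 2) + 2*a*(∑ j, x2 j) + m * a^2 := by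
      rw [hBdef]
      have : ∀ i ∈ Finset.univ, (x2 i + a)^2 = x2 i^2 + 2*a*x2 i + a^2 :=
        fun i _ => by ring
      rw [Finset.sum_congr rfl this, Finset.sum_add_distrib, Finset.sum_add_distrib,
        ← Finset.mul_sum, Finset.sum_const, Finset.card_univ, Fintype.card_fin,
        nsmul_eq_mul]
    rw [eB]
    linear_combination 2*a*hS2
  have hnorm : A + B + 2*(m:ℝ)*a^2 = 1 := by linarith
  -- matching term and Cauchy–Schwarz
  set N : ℝ := (C.card : ℝ) with hNdef
  set t : ℝ := ∑ i ∈ C, ((x1 i - a) - (x2 i + a)) with htdef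
  set T : ℝ := ∑ i ∈ C, (x1 i - x2 i)^2 with hTdef
  have hcard : 0 < C.card := by
    rcases Nat.eq_zero_or_pos C.card with h0 | h
    · rw [h0] at hC; simp at hC; omega
    · exact h
  have hN : (1:ℝ) ≤ N := by rw [hNdef]; exact_mod_cast hcard
  have hNk : N * k = 2 * m := by rw [hNdef]; exact_mod_cast hC
  have hsumC : ∑ i ∈ C, (x1 i - x2 i) = t + 2*a*N := by
    have : ∀ i, x1 i - x2 i = ((x1 i - a) - (x2 i + a)) + 2*a := fun i => by ring
    rw [Finset.sum_congr rfl fun i _ => this i, Finset.sum_add_distrib,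
      Finset.sum_const, nsmul_eq_mul, htdef, hNdef]
    ring
  have hCS1 : (t + 2*a*N)^2 ≤ N * T := by
    rw [← hsumC, hTdef, hNdef]
    exact sq_sum_le_card_mul_sum_sq
  have hCS2 : t^2 ≤ N * (2*(A+B)) := by
    have c1 : t^2 ≤ N * ∑ i ∈ C, ((x1 i - a) - (x2 i + a))^2 := by
      rw [htdef, hNdef]; exact sq_sum_le_card_mul_sum_sq
    have c2 : ∑ i ∈ C, ((x1 i - a) - (x2 i + a))^2 ≤ 2*(A+B) := by
      have step1 : ∑ i ∈ C, ((x1 i - a) - (x2 i + a))^2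
          ≤ ∑ i ∈ C, (2*(x1 i - a)^2 + 2*(x2 i + a)^2) :=
        Finset.sum_le_sum fun i _ => by nlinarith [sq_nonneg ((x1 i - a) + (x2 i + a))]
      have step2 : ∑ i ∈ C, (2*(x1 i - a)^2 + 2*(x2 i + a)^2)
          ≤ ∑ i, (2*(x1 i - a)^2 + 2*(x2 i + a)^2) :=
        Finset.sum_le_sum_of_subset_of_nonneg (Finset.subset_univ C)
          (fun i _ _ => by positivity)
      have step3 : ∑ i, (2*(x1 i - a)^2 + 2*(x2 i + a)^2) = 2*(A+B) := by
        rw [Finset.sum_add_distrib, ← Finset.mul_sum, ← Finset.mul_sum, hAdef, hBdef]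
        ring
      linarith
    calc t^2 ≤ N * ∑ i ∈ C, ((x1 i - a) - (x2 i + a))^2 := c1
      _ ≤ N * (2*(A+B)) := by
          apply mul_le_mul_of_nonneg_left c2 (by linarith)
  have hA0 : 0 ≤ A := Finset.sum_nonneg fun i _ => sq_nonneg _
  have hB0 : 0 ≤ B := Finset.sum_nonneg fun i _ => sq_nonneg _
  have hT0 : 0 ≤ T := Finset.sum_nonneg fun i _ => sq_nonneg _
  have hk' : (1:ℝ) ≤ k := by exact_mod_cast hk
  have main := final_arith c hc m k N A B a t T hk' hN hNk hA0 hB0 hT0 hCS1 hCS2 hnorm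
  rw [hquad]
  linarith
end
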